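/- Let k be a commutative ring, G a group, and r ≥ 1. Suppose given k-linear representations C_0, …, C_r and D_0, …, D_r of G, G-equivariant maps f_i : C_i → C_{i−1} and g_i : D_i → D_{i−1} for 1 ≤ i ≤ r, and G-equivariant maps ι_i : C_i → D_i for 0 ≤ i ≤ r with g_i ∘ ι_i = ι_{i−1} ∘ f_i for all i. Assume: (a) the complex 0 → C_r → C_{r−1} → ⋯ → C_1 → C_0 → 0 is exact (exact at each C_i for 0 < i < r, f_r is injective, and f_1 is surjective); (b) for every i ≥ 1 and every 1 ≤ j ≤ r, the group cohomology H^i(G, D_j) = 0. Then for every j ≥ 1, the induced map ι_{0,*} : H^j(G, C_0) → H^j(G, D_0) on group cohomology is the zero map. -/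

import Mathlib

open CategoryTheory Limits Opposite

noncomputable section StmtAux

namespace Stmt8Aux

section Bridge

universe v u

variable {C : Type u} [Category.{v} C] [Abelian C] [EnoughProjectives C] {X : C}
  (P : ProjectiveResolution X)

/-- The induced map on Hom-complexes `Hom(P, A) ⟶ Hom(P, B)`. -/
def yMap (R : Type v) [CommRing R] [Linear R C] {A B : C} (f : A ⟶ B) :
    P.complex.linearYonedaObj R A ⟶ P.complex.linearYonedaObj R B :=
  (HomologicalComplex.unopFunctor _ _).map
    ((NatTrans.mapHomologicalComplex
      (NatTrans.rightOp ((linearYoneda R C).map f)) (ComplexShape.down ℕ)).app P.complex).op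

lemma yMap_f_apply (R : Type v) [CommRing R] [Linear R C] {A B : C} (f : A ⟶ B) (i : ℕ)
    (x : P.complex.X i ⟶ A) : ((yMap P R f).f i) x = x ≫ f := rfl

lemma ext_map_eq_zero (R : Type v) [CommRing R] [Linear R C] {A B : C} (f : A ⟶ B) (n : ℕ)
    (h : HomologicalComplex.homologyMap (yMap P R f) n = 0) :
    ((Ext R C n).obj (op X)).map f = 0 := by
  have e1 : ((Ext R C n).obj (op X)).map f =
      ((NatTrans.leftDerived (NatTrans.rightOp ((linearYoneda R C).map f)) n).app X).unop := rfl
  rw [e1, ProjectiveResolution.leftDerived_app_eq _ P n]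
  set ψ := ((NatTrans.mapHomologicalComplex
      (NatTrans.rightOp ((linearYoneda R C).map f)) (ComplexShape.down ℕ)).app P.complex)
    with hψdef
  have hψ : HomologicalComplex.homologyMap ψ n = 0 := by
    have nat := HomologicalComplex.homologyOp_hom_naturality (φ := yMap P R f) n
    rw [h] at nat
    simp only [op_zero, comp_zero] at nat
    have e2 : (HomologicalComplex.opFunctor _ _).map (yMap P R f).op = ψ := rfl
    rw [e2] at nat
    exact (cancel_mono ((((P.complex.linearYonedaObj R A)).homologyOp n).hom)).1
      (nat.trans Limits.zero_comp.symm)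
  show ((_ ≫ (HomologicalComplex.homologyFunctor _ _ n).map ψ ≫ _)).unop = 0
  have e3 : (HomologicalComplex.homologyFunctor _ (ComplexShape.down ℕ) n).map ψ
      = HomologicalComplex.homologyMap ψ n := rfl
  rw [e3, hψ]
  simp
  exact congrArg Quiver.Hom.unop Limits.zero_comp

end Bridge

section ModuleHelpers

variable {R : Type} [CommRing R]

lemma acyc_helper (K : CochainComplex (ModuleCat R) ℕ) (s : ℕ)
    (h : IsZero (K.homology (s + 1))) (x : K.X (s + 1)) (hx : K.d (s + 1) (s + 2) x = 0) :
    ∃ y : K.X s, K.d s (s + 1) y = x := by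
  have hex : K.ExactAt (s + 1) := (K.exactAt_iff_isZero_homology (s + 1)).2 h
  rw [K.exactAt_iff' s (s + 1) (s + 2) (by simp) (by simp)] at hex
  exact (ShortComplex.moduleCat_exact_iff _).1 hex x hx

lemma homologyMap_eq_zero (K L : CochainComplex (ModuleCat R) ℕ) (φ : K ⟶ L) (s : ℕ)
    (h : ∀ x : K.X (s + 1), K.d (s + 1) (s + 2) x = 0 →
      ∃ y : L.X s, L.d s (s + 1) y = φ.f (s + 1) x) :
    HomologicalComplex.homologyMap φ (s + 1) = 0 := by
  rw [← cancel_epi (K.homologyπ (s + 1)), HomologicalComplex.homologyπ_naturality, comp_zero]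
  ext (z : K.cycles (s + 1))
  have hz : K.d (s + 1) (s + 2) (K.iCycles (s + 1) z) = 0 := by
    have h1 := K.iCycles_d (s + 1) (s + 2)
    calc K.d (s + 1) (s + 2) (K.iCycles (s + 1) z)
        = (K.iCycles (s + 1) ≫ K.d (s + 1) (s + 2)) z := rfl
      _ = 0 := by rw [h1]; rfl
  obtain ⟨y, hy⟩ := h _ hz
  have key : HomologicalComplex.cyclesMap φ (s + 1) z = L.toCycles s (s + 1) y := by
    apply (ModuleCat.mono_iff_injective (L.iCycles (s + 1))).1 inferInstance
    have e1 : L.iCycles (s + 1) (HomologicalComplex.cyclesMap φ (s + 1) z)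
        = φ.f (s + 1) (K.iCycles (s + 1) z) := by
      have h2 := HomologicalComplex.cyclesMap_i φ (s + 1)
      calc L.iCycles (s + 1) (HomologicalComplex.cyclesMap φ (s + 1) z)
          = (HomologicalComplex.cyclesMap φ (s + 1) ≫ L.iCycles (s + 1)) z := rfl
        _ = (K.iCycles (s + 1) ≫ φ.f (s + 1)) z := by rw [h2]
        _ = _ := rfl
    have e2 : L.iCycles (s + 1) (L.toCycles s (s + 1) y) = L.d s (s + 1) y := by
      have h3 := L.toCycles_i s (s + 1)
      calc L.iCycles (s + 1) (L.toCycles s (s + 1) y)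
          = (L.toCycles s (s + 1) ≫ L.iCycles (s + 1)) y := rfl
        _ = _ := by rw [h3]
    rw [e1, e2, hy]
  show (HomologicalComplex.cyclesMap φ (s + 1) ≫ L.homologyπ (s + 1)) z = 0
  calc (HomologicalComplex.cyclesMap φ (s + 1) ≫ L.homologyπ (s + 1)) z
      = L.homologyπ (s + 1) (HomologicalComplex.cyclesMap φ (s + 1) z) := rfl
    _ = L.homologyπ (s + 1) (L.toCycles s (s + 1) y) := by rw [key]
    _ = (L.toCycles s (s + 1) ≫ L.homologyπ (s + 1)) y := rfl
    _ = 0 := by rw [L.toCycles_comp_homologyπ]; rfl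

end ModuleHelpers

section RepHelpers

variable {k G : Type} [CommRing k] [Group G]

lemma rep_epi_of_surjective {A B : Rep k G} (f : A ⟶ B) (h : Function.Surjective ⇑f.hom) :
    Epi f :=
  (Rep.epi_iff_surjective f).2 h

lemma rep_mono_of_injective {A B : Rep k G} (f : A ⟶ B) (h : Function.Injective ⇑f.hom) :
    Mono f :=
  (Rep.mono_iff_injective f).2 h

lemma rep_ker_lift_epi {A B Cc : Rep k G} (a : A ⟶ B) (b : B ⟶ Cc) (w : a ≫ b = 0)
    (hex : Function.Exact ⇑a.hom ⇑b.hom) : Epi (kernel.lift b a w) := by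
  rw [Rep.epi_iff_surjective]
  intro z
  have hz : b.hom ((kernel.ι b).hom z) = 0 := by
    have h1 : (kernel.ι b ≫ b) = 0 := kernel.condition b
    calc b.hom ((kernel.ι b).hom z) = (kernel.ι b ≫ b).hom z := rfl
      _ = 0 := by rw [h1]; rfl
  obtain ⟨y, hy⟩ := (hex _).1 hz
  refine ⟨y, ?_⟩
  have hmono : Function.Injective ⇑(kernel.ι b).hom := by
    rw [← Rep.mono_iff_injective]
    infer_instance
  apply hmono
  calc (kernel.ι b).hom ((kernel.lift b a w).hom y)
      = (kernel.lift b a w ≫ kernel.ι b).hom y := rfl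
    _ = a.hom y := by rw [kernel.lift_ι]
    _ = (kernel.ι b).hom z := hy

end RepHelpers

end Stmt8Aux

end StmtAux

open Stmt8Aux

/-- the cascade argument, Theorem `t:push`: given a morphism of
complexes of `k`-linear `G`-representations as in Theorem `t:comm`, where `C^•` is exact
and the `D_j` (`1 ≤ j ≤ r`) are acyclic, the map `ι_{0,*} : H^j(G, C_0) → H^j(G, D_0)`
induced on group cohomology vanishes for all `j ≥ 1`.  The induced map is expressed via
the isomorphism `groupCohomologyIsoExt` with the functorial `Ext(k, −)`. -/
theorem stmt8 {k : Type} [CommRing k] {G : Type} [Group G] (r : ℕ) (hr : 1 ≤ r)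
    (C D : ℕ → Rep k G)
    (f : ∀ i : ℕ, C (i + 1) ⟶ C i)
    (gm : ∀ i : ℕ, D (i + 1) ⟶ D i)
    (ι : ∀ i : ℕ, C i ⟶ D i)
    (hcomm : ∀ i : ℕ, i + 1 ≤ r → ι (i + 1) ≫ gm i = f i ≫ ι i)
    (hCcx : ∀ i : ℕ, i + 2 ≤ r → f (i + 1) ≫ f i = 0)
    (hDcx : ∀ i : ℕ, i + 2 ≤ r → gm (i + 1) ≫ gm i = 0)
    (hsurj : Function.Surjective ⇑((f 0).hom))
    (hinj : Function.Injective ⇑((f (r - 1)).hom))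
    (hexact : ∀ i : ℕ, i + 2 ≤ r → Function.Exact ⇑((f (i + 1)).hom) ⇑((f i).hom))
    (hacyc : ∀ i : ℕ, 1 ≤ i → ∀ j : ℕ, 1 ≤ j → j ≤ r →
      Limits.IsZero (groupCohomology (D j) i)) :
    ∀ j : ℕ, 1 ≤ j →
      (groupCohomologyIsoExt (C 0) j).hom
        ≫ ((Ext k (Rep k G) j).obj (Opposite.op (Rep.trivial k G k))).map (ι 0)
        ≫ (groupCohomologyIsoExt (D 0) j).inv = 0 := by
  intro j hj
  obtain ⟨s, rfl⟩ : ∃ s, j = s + 1 := ⟨j - 1, by omega⟩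
  suffices hz : ((Ext k (Rep k G) (s + 1)).obj (Opposite.op (Rep.trivial k G k))).map (ι 0) = 0 by
    rw [hz]; simp
  set P := Rep.barResolution k G with hP
  -- acyclicity transported to the Hom-complexes
  have hacyc' : ∀ m : ℕ, 1 ≤ m → ∀ j' : ℕ, 1 ≤ j' → j' ≤ r →
      IsZero ((P.complex.linearYonedaObj k (D j')).homology m) := by
    intro m hm j' h1 h2
    have h0 : IsZero (HomologicalComplex.homology
        (P.complex.linearYonedaObj k (D j')) m) :=
      (hacyc m hm j' h1 h2).of_iso (groupCohomologyIso (D j') m P).symm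
    exact h0
  -- the cascade
  have main : ∀ t i : ℕ, i + 1 + t = r →
      ∀ s' : ℕ, ∀ e : P.complex.X (s' + 2) ⟶ kernel (f i),
        P.complex.d (s' + 3) (s' + 2) ≫ e = 0 →
        ∃ u : P.complex.X (s' + 1) ⟶ D (i + 1),
          (P.complex.d (s' + 2) (s' + 1) ≫ u = e ≫ kernel.ι (f i) ≫ ι (i + 1)) ∧
          u ≫ gm i = 0 := by
    intro t
    induction t with
    | zero =>
      intro i hi s' e he
      have hri : r - 1 = i := by omega
      rw [hri] at hinj
      have hmono : Mono (f i) := rep_mono_of_injective _ hinj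
      have hK : IsZero (kernel (f i)) := (isZero_zero _).of_iso (kernel.ofMono (f i))
      have he0 : e = 0 := hK.eq_of_tgt e 0
      exact ⟨0, by rw [he0]; simp, by simp⟩
    | succ t ih =>
      intro i hi s' e he
      have hi2 : i + 2 ≤ r := by omega
      have hw : f (i + 1) ≫ f i = 0 := hCcx i hi2
      have hepi : Epi (kernel.lift (f i) (f (i + 1)) hw) :=
        rep_ker_lift_epi _ _ _ (hexact i hi2)
      set dd := kernel.lift (f i) (f (i + 1)) hw with hdd
      set b := Projective.factorThru e dd with hb
      have hbd : b ≫ dd = e := Projective.factorThru_comp _ _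
      have hcond : (P.complex.d (s' + 3) (s' + 2) ≫ b) ≫ f (i + 1) = 0 := by
        have h1 : (P.complex.d (s' + 3) (s' + 2) ≫ b) ≫ dd = 0 := by
          rw [Category.assoc, hbd, he]
        rw [← kernel.lift_ι (f i) (f (i + 1)) hw, ← hdd, ← Category.assoc, h1, zero_comp]
      have he'c : P.complex.d (s' + 4) (s' + 3) ≫
          kernel.lift (f (i + 1)) (P.complex.d (s' + 3) (s' + 2) ≫ b) hcond = 0 := by
        rw [← cancel_mono (kernel.ι (f (i + 1)))]
        rw [Category.assoc, kernel.lift_ι, ← Category.assoc,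
          HomologicalComplex.d_comp_d, zero_comp, zero_comp]
      obtain ⟨u', hu'd, hu'g⟩ := ih (i + 1) (by omega) (s' + 1)
        (kernel.lift (f (i + 1)) (P.complex.d (s' + 3) (s' + 2) ≫ b) hcond) he'c
      have hlift : kernel.lift (f (i + 1)) (P.complex.d (s' + 3) (s' + 2) ≫ b) hcond ≫
          kernel.ι (f (i + 1)) ≫ ι (i + 2) = P.complex.d (s' + 3) (s' + 2) ≫ b ≫ ι (i + 2) := by
        rw [← Category.assoc, kernel.lift_ι, Category.assoc]
      have hwcoc : P.complex.d (s' + 3) (s' + 2) ≫ (b ≫ ι (i + 2) - u') = 0 := by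
        rw [Preadditive.comp_sub, hu'd, hlift, sub_self]
      have hac := hacyc' (s' + 2) (by omega) (i + 2) (by omega) hi2
      obtain ⟨(v : P.complex.X (s' + 1) ⟶ D (i + 2)), hv⟩ := acyc_helper (P.complex.linearYonedaObj k (D (i + 2))) (s' + 1) hac
        (x := b ≫ ι (i + 2) - u') (by show P.complex.d (s' + 3) (s' + 2) ≫ _ = 0; exact hwcoc)
      have hv' : P.complex.d (s' + 2) (s' + 1) ≫ v = b ≫ ι (i + 2) - u' := hv
      refine ⟨v ≫ gm (i + 1), ?_, ?_⟩
      · have hstep : b ≫ f (i + 1) = e ≫ kernel.ι (f i) := by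
          rw [← kernel.lift_ι (f i) (f (i + 1)) hw, ← hdd, ← Category.assoc, hbd]
        rw [← Category.assoc, hv', Preadditive.sub_comp, hu'g, sub_zero, Category.assoc,
          hcomm (i + 1) hi2, ← Category.assoc, hstep, Category.assoc]
      · rw [Category.assoc, hDcx i hi2, comp_zero]
  -- conclude
  refine ext_map_eq_zero (C := Rep k G) (X := Rep.trivial k G k) P k (ι 0) (s + 1) ?_
  apply homologyMap_eq_zero
  intro x hx
  have hx' : P.complex.d (s + 2) (s + 1) ≫ x = 0 := hx
  have hepi0 : Epi (f 0) := rep_epi_of_surjective _ hsurj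
  set b := Projective.factorThru x (f 0) with hb
  have hbd : b ≫ f 0 = x := Projective.factorThru_comp _ _
  have hcond : (P.complex.d (s + 2) (s + 1) ≫ b) ≫ f 0 = 0 := by
    rw [Category.assoc, hbd, hx']
  set e := kernel.lift (f 0) (P.complex.d (s + 2) (s + 1) ≫ b) hcond with he
  have hec : P.complex.d (s + 3) (s + 2) ≫ e = 0 := by
    rw [← cancel_mono (kernel.ι (f 0))]
    rw [Category.assoc, kernel.lift_ι, ← Category.assoc,
      HomologicalComplex.d_comp_d, zero_comp, zero_comp]
  obtain ⟨u, hud, hug⟩ := main (r - 1) 0 (by omega) s e hec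
  have hlift0 : e ≫ kernel.ι (f 0) ≫ ι 1 = P.complex.d (s + 2) (s + 1) ≫ b ≫ ι 1 := by
    rw [he, ← Category.assoc, kernel.lift_ι, Category.assoc]
  have hwcoc : P.complex.d (s + 2) (s + 1) ≫ (b ≫ ι 1 - u) = 0 := by
    rw [Preadditive.comp_sub, hud, hlift0, sub_self]
  have hac := hacyc' (s + 1) (by omega) 1 (by omega) hr
  obtain ⟨(v : P.complex.X s ⟶ D 1), hv⟩ := acyc_helper (P.complex.linearYonedaObj k (D 1)) s hac
    (x := b ≫ ι 1 - u) (by show P.complex.d (s + 2) (s + 1) ≫ _ = 0; exact hwcoc)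
  have hv' : P.complex.d (s + 1) s ≫ v = b ≫ ι 1 - u := hv
  refine ⟨v ≫ gm 0, ?_⟩
  show P.complex.d (s + 1) s ≫ (v ≫ gm 0) = x ≫ ι 0
  rw [← Category.assoc, hv', Preadditive.sub_comp, hug, sub_zero, Category.assoc,
    hcomm 0 hr, ← Category.assoc, hbd]
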